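/- Let q = p^n, p ≡ 3 (mod 4), n odd, t ≠ 0, and let g : F_q^2 → ℂ be supported on S_t. Define \hat{(gS_t)}(ξ) = q^{-2} Σ_m χ(−m·ξ) g(m). Then Σ_ξ |\hat{(gS_t)}(ξ)|^4 ≤ C q^{-6} (Σ_m |g(m)|^2)^2. -/

import Mathlib

open Matrix Finset
open scoped ComplexConjugate

-- three roots of a quadratic: two coincide
lemma quad_roots {F : Type*} [Field F] {A B C x y z : F} (hA : A ≠ 0)
    (hx : A*x^2 + B*x + C = 0) (hy : A*y^2 + B*y + C = 0) (hz : A*z^2 + B*z + C = 0) :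
    x = y ∨ x = z ∨ y = z := by
  by_contra h
  push_neg at h
  obtain ⟨hxy, hxz, hyz⟩ := h
  have k1 : A*(x+y) + B = 0 := by
    have e : (x - y) * (A*(x+y)+B) = 0 := by linear_combination hx - hy
    rcases mul_eq_zero.1 e with e | e
    · exact absurd (sub_eq_zero.1 e) hxy
    · exact e
  have k2 : A*(x+z) + B = 0 := by
    have e : (x - z) * (A*(x+z)+B) = 0 := by linear_combination hx - hz
    rcases mul_eq_zero.1 e with e | e
    · exact absurd (sub_eq_zero.1 e) hxz
    · exact e
  have : A * (y - z) = 0 := by linear_combination k1 - k2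
  rcases mul_eq_zero.1 this with e | e
  · exact hA e
  · exact hyz (sub_eq_zero.1 e)

lemma card_le_two_of_quad {α : Type*} {F : Type*} [Field F] (S : Finset α) (f : α → F)
    (A B C : F) (hA : A ≠ 0)
    (hq : ∀ x ∈ S, A*(f x)^2 + B*(f x) + C = 0)
    (hinj : ∀ x ∈ S, ∀ y ∈ S, f x = f y → x = y) : S.card ≤ 2 := by
  by_contra h
  push_neg at h
  obtain ⟨x, y, z, hx, hy, hz, hxy, hxz, hyz⟩ := Finset.two_lt_card_iff.1 h
  rcases quad_roots hA (hq x hx) (hq y hy) (hq z hz) with e | e | e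
  · exact hxy (hinj x hx y hy e)
  · exact hxz (hinj x hx z hz e)
  · exact hyz (hinj y hy z hz e)

lemma circle_card {F : Type*} [Field F] [Fintype F] [DecidableEq F]
    (hns : ¬ IsSquare (-1 : F)) (h2 : (2:F) ≠ 0) (t : F) (s : Fin 2 → F) (hs : s ≠ 0) :
    (Finset.univ.filter fun m : Fin 2 → F =>
      m 0^2 + m 1^2 = t ∧ (s - m) 0^2 + (s - m) 1^2 = t).card ≤ 2 := by
  set c : F := s 0^2 + s 1^2 with hc
  have hcne : c ≠ 0 := by
    intro h
    by_cases h1 : s 1 = 0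
    · have h0 : s 0 = 0 := by
        have : s 0 ^ 2 = 0 := by rw [hc, h1] at h; linear_combination h
        exact pow_eq_zero_iff (n := 2) (by norm_num) |>.1 this
      exact hs (funext fun i => by fin_cases i <;> simpa [h0, h1])
    · exact hns ⟨s 0 / s 1, by field_simp; linear_combination -h⟩
  have hline : ∀ m : Fin 2 → F, m 0^2 + m 1^2 = t → (s - m) 0^2 + (s - m) 1^2 = t →
      2*(s 0 * m 0 + s 1 * m 1) = c := by
    intro m e1 e2
    simp only [Pi.sub_apply] at e2
    rw [hc]; linear_combination e1 - e2
  by_cases h1 : s 1 ≠ 0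
  · apply card_le_two_of_quad _ (fun m => m 0) (4*c) (-(4*c*s 0)) (c^2 - 4*t*(s 1)^2)
    · intro h; rcases mul_eq_zero.1 h with h | h
      · exact h2 (by rcases mul_eq_zero.1 (show (2:F)*2 = 0 by linear_combination h) with h|h <;> exact h)
      · exact hcne h
    · intro m hm
      rw [Finset.mem_filter] at hm
      obtain ⟨-, e1, e2⟩ := hm
      have e3 := hline m e1 e2
      linear_combination (4*(s 1)^2) * e1 + (2*(s 0)*(m 0) - 2*(s 1)*(m 1) - c) * e3
    · intro m hm m' hm' hf
      rw [Finset.mem_filter] at hm hm'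
      obtain ⟨-, e1, e2⟩ := hm
      obtain ⟨-, e1', e2'⟩ := hm'
      have e3 := hline m e1 e2
      have e3' := hline m' e1' e2'
      have hm1 : m 1 = m' 1 := by
        have h21 : (2 * s 1) ≠ 0 := mul_ne_zero h2 h1
        have : 2 * s 1 * m 1 = 2 * s 1 * m' 1 := by linear_combination e3 - e3' - 2 * s 0 * hf
        exact mul_left_cancel₀ h21 this
      exact funext fun i => by fin_cases i <;> assumption
  · push_neg at h1
    have h0 : s 0 ≠ 0 := by
      intro h0; exact hs (funext fun i => by fin_cases i <;> simpa [h0, h1])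
    have hm0 : ∀ m : Fin 2 → F, m 0^2 + m 1^2 = t → (s - m) 0^2 + (s - m) 1^2 = t →
        m 0 = c / (2 * s 0) := by
      intro m e1 e2
      have e3 := hline m e1 e2
      rw [h1] at e3
      rw [eq_div_iff (mul_ne_zero h2 h0)]
      linear_combination e3
    apply card_le_two_of_quad _ (fun m => m 1) 1 0 ((c/(2*s 0))^2 - t) one_ne_zero
    · intro m hm
      rw [Finset.mem_filter] at hm
      obtain ⟨-, e1, e2⟩ := hm
      have := hm0 m e1 e2
      rw [← this]
      linear_combination e1
    · intro m hm m' hm' hf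
      rw [Finset.mem_filter] at hm hm'
      obtain ⟨-, e1, e2⟩ := hm
      obtain ⟨-, e1', e2'⟩ := hm'
      have := (hm0 m e1 e2).trans (hm0 m' e1' e2').symm
      exact funext fun i => by fin_cases i <;> assumption

lemma char_sum_single {F : Type*} [Field F] [Fintype F] [DecidableEq F]
    (χ : AddChar F ℂ) (hχ : χ ≠ 1) (a : F) :
    ∑ x : F, χ (a * x) = if a = 0 then (Fintype.card F : ℂ) else 0 := by
  split_ifs with h
  · simp [h]
  · have : χ.mulShift a ≠ 1 := by
      obtain ⟨y, hy⟩ := AddChar.ne_one_iff.1 hχ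
      refine AddChar.ne_one_iff.2 ⟨a⁻¹ * y, ?_⟩
      rw [AddChar.mulShift_apply, ← mul_assoc, mul_inv_cancel₀ h, one_mul]
      exact hy
    have := AddChar.sum_eq_zero_of_ne_one this
    simpa [AddChar.mulShift_apply] using this

lemma char_sum_vec {F : Type*} [Field F] [Fintype F] [DecidableEq F]
    (χ : AddChar F ℂ) (hχ : χ ≠ 1) (v : Fin 2 → F) :
    ∑ ξ : Fin 2 → F, χ (v ⬝ᵥ ξ) = if v = 0 then (Fintype.card F : ℂ)^2 else 0 := by
  have e : ∑ ξ : Fin 2 → F, χ (v ⬝ᵥ ξ)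
      = ∑ p : F × F, χ (v 0 * p.1) * χ (v 1 * p.2) := by
    refine (Fintype.sum_equiv (finTwoArrowEquiv F).symm _ _ fun p => ?_).symm
    rw [← AddChar.map_add_eq_mul]
    congr 1
    simp [finTwoArrowEquiv, dotProduct, Fin.sum_univ_two]
  have e2 : ∑ p : F × F, χ (v 0 * p.1) * χ (v 1 * p.2)
      = (∑ x : F, χ (v 0 * x)) * (∑ y : F, χ (v 1 * y)) := by
    rw [Finset.sum_mul_sum]
    exact Fintype.sum_prod_type _
  rw [e, e2, char_sum_single χ hχ, char_sum_single χ hχ]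
  by_cases h0 : v 0 = 0 <;> by_cases h1 : v 1 = 0
  · have : v = 0 := funext fun i => by fin_cases i <;> assumption
    simp [h0, h1, this, sq]
  · have : v ≠ 0 := fun h => h1 (by rw [h]; rfl)
    simp [h0, h1, this]
  · have : v ≠ 0 := fun h => h0 (by rw [h]; rfl)
    simp [h0, h1, this]
  · have : v ≠ 0 := fun h => h0 (by rw [h]; rfl)
    simp [h0, h1, this]

lemma comb {F : Type*} [Field F] [Fintype F] [DecidableEq F]
    (hns : ¬ IsSquare (-1 : F)) (h2 : (2:F) ≠ 0) (t : F)
    (a : (Fin 2 → F) → ℝ) (ha : ∀ m, 0 ≤ a m)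
    (hsupp : ∀ m : Fin 2 → F, m 0^2 + m 1^2 ≠ t → a m = 0) :
    ∑ τ : ((Fin 2 → F) × (Fin 2 → F)) × ((Fin 2 → F) × (Fin 2 → F)),
      (if τ.1.1 + τ.2.1 = τ.1.2 + τ.2.2 then a τ.1.1 * a τ.1.2 * (a τ.2.1 * a τ.2.2) else 0)
    ≤ 3 * (∑ m : Fin 2 → F, a m^2)^2 := by
  set A : ℝ := ∑ m : Fin 2 → F, a m^2 with hAdef
  set R : (Fin 2 → F) → ℝ := fun s => ∑ m : Fin 2 → F, a m * a (s - m) with hRdef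
  have hbig : ∑ τ : ((Fin 2 → F) × (Fin 2 → F)) × ((Fin 2 → F) × (Fin 2 → F)),
      (if τ.1.1 + τ.2.1 = τ.1.2 + τ.2.2 then a τ.1.1 * a τ.1.2 * (a τ.2.1 * a τ.2.2) else 0)
      = ∑ s : Fin 2 → F, R s ^ 2 := by
    have e1 : ∑ τ : ((Fin 2 → F) × (Fin 2 → F)) × ((Fin 2 → F) × (Fin 2 → F)),
        (if τ.1.1 + τ.2.1 = τ.1.2 + τ.2.2 then a τ.1.1 * a τ.1.2 * (a τ.2.1 * a τ.2.2) else 0)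
        = ∑ m : Fin 2 → F, ∑ m' : Fin 2 → F, ∑ l : Fin 2 → F, ∑ l' : Fin 2 → F,
          (if m + l = m' + l' then a m * a m' * (a l * a l') else 0) := by
      simp only [Fintype.sum_prod_type]
    rw [e1]
    have e2 : ∀ m : Fin 2 → F, ∑ m' : Fin 2 → F, ∑ l : Fin 2 → F, ∑ l' : Fin 2 → F,
        (if m + l = m' + l' then a m * a m' * (a l * a l') else 0)
        = ∑ l : Fin 2 → F, ∑ m' : Fin 2 → F, ∑ l' : Fin 2 → F,
        (if m + l = m' + l' then a m * a m' * (a l * a l') else 0) :=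
      fun m => Finset.sum_comm
    simp only [e2]
    have e3 : ∀ (m l m' : Fin 2 → F), ∑ l' : Fin 2 → F,
        (if m + l = m' + l' then a m * a m' * (a l * a l') else 0)
        = a m * a m' * (a l * a (m + l - m')) := by
      intro m l m'
      have : ∀ l' : Fin 2 → F, (if m + l = m' + l' then a m * a m' * (a l * a l') else 0)
          = (if l' = m + l - m' then a m * a m' * (a l * a l') else 0) := by
        intro l'
        refine if_congr ⟨fun h => by rw [h]; ring, fun h => by rw [h]; ring⟩ rfl rfl
      simp only [this]
      rw [Finset.sum_ite_eq' Finset.univ (m + l - m')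
        (fun l' => a m * a m' * (a l * a l'))]
      simp
    simp only [e3]
    have e4 : ∀ (m l : Fin 2 → F), ∑ m' : Fin 2 → F, a m * a m' * (a l * a (m + l - m'))
        = a m * a l * R (m + l) := by
      intro m l
      rw [hRdef]
      simp only []
      rw [Finset.mul_sum]
      exact Finset.sum_congr rfl fun m' _ => by ring
    simp only [e4]
    have e5 : ∀ m : Fin 2 → F, ∑ l : Fin 2 → F, a m * a l * R (m + l)
        = ∑ s : Fin 2 → F, a m * a (s - m) * R s := by
      intro m
      refine Fintype.sum_equiv (Equiv.addLeft m) _ _ fun l => ?_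
      simp [add_sub_cancel_left]
    simp only [e5]
    rw [Finset.sum_comm]
    refine Finset.sum_congr rfl fun s _ => ?_
    rw [sq, ← Finset.sum_mul, hRdef]
  rw [hbig]
  have hRnonneg : ∀ s, 0 ≤ R s :=
    fun s => Finset.sum_nonneg fun m _ => mul_nonneg (ha _) (ha _)
  have hA0 : 0 ≤ A := Finset.sum_nonneg fun m _ => sq_nonneg _
  have hnegA : ∑ m : Fin 2 → F, a (-m)^2 = A := by
    rw [hAdef]
    exact Fintype.sum_equiv (Equiv.neg _) _ _ fun x => by simp
  have hR0 : R 0 ≤ A := by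
    have h1 : R 0 = ∑ m : Fin 2 → F, a m * a (-m) := by
      rw [hRdef]; simp only []; exact Finset.sum_congr rfl fun m _ => by rw [zero_sub]
    rw [h1]
    calc ∑ m : Fin 2 → F, a m * a (-m)
        ≤ ∑ m : Fin 2 → F, (a m^2 + a (-m)^2)/2 :=
          Finset.sum_le_sum fun m _ => by nlinarith [sq_nonneg (a m - a (-m))]
      _ = (A + ∑ m : Fin 2 → F, a (-m)^2)/2 := by
          rw [← Finset.sum_div, Finset.sum_add_distrib, hAdef]
      _ = A := by rw [hnegA]; ring
  have hR0sq : R 0^2 ≤ A^2 := pow_le_pow_left₀ (hRnonneg 0) hR0 2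
  have hRs : ∀ s : Fin 2 → F, s ≠ 0 → R s^2 ≤ 2 * ∑ m : Fin 2 → F, (a m * a (s - m))^2 := by
    intro s hs
    set S : Finset (Fin 2 → F) := Finset.univ.filter fun m : Fin 2 → F =>
      m 0^2 + m 1^2 = t ∧ (s - m) 0^2 + (s - m) 1^2 = t with hSdef
    have hsub : R s = ∑ m ∈ S, a m * a (s - m) := by
      rw [hRdef]
      refine (Finset.sum_subset (Finset.subset_univ S) fun m _ hm => ?_).symm
      rw [hSdef] at hm
      simp only [Finset.mem_filter, Finset.mem_univ, true_and] at hm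
      by_cases hc1 : m 0^2 + m 1^2 = t
      · rw [hsupp (s - m) fun h => hm ⟨hc1, h⟩, mul_zero]
      · rw [hsupp m hc1, zero_mul]
    have hcard : S.card ≤ 2 := circle_card hns h2 t s hs
    calc R s^2 = (∑ m ∈ S, a m * a (s - m))^2 := by rw [hsub]
      _ ≤ S.card * ∑ m ∈ S, (a m * a (s - m))^2 := sq_sum_le_card_mul_sum_sq
      _ ≤ 2 * ∑ m ∈ S, (a m * a (s - m))^2 := by
          have : (S.card : ℝ) ≤ 2 := by exact_mod_cast hcard
          exact mul_le_mul_of_nonneg_right this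
            (Finset.sum_nonneg fun m _ => sq_nonneg _)
      _ ≤ 2 * ∑ m : Fin 2 → F, (a m * a (s - m))^2 := by
          refine mul_le_mul_of_nonneg_left ?_ (by norm_num)
          exact Finset.sum_le_sum_of_subset_of_nonneg (Finset.subset_univ S)
            fun m _ _ => sq_nonneg _
  have htail : ∑ s ∈ Finset.univ.erase (0 : Fin 2 → F), R s^2 ≤ 2 * A^2 := by
    have hAs : ∀ m : Fin 2 → F, ∑ s : Fin 2 → F, a (s - m)^2 = A := by
      intro m
      rw [hAdef]
      exact Fintype.sum_equiv (Equiv.subRight m) _ _ fun s => by simp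
    calc ∑ s ∈ Finset.univ.erase (0 : Fin 2 → F), R s^2
        ≤ ∑ s ∈ Finset.univ.erase (0 : Fin 2 → F),
            2 * ∑ m : Fin 2 → F, (a m * a (s - m))^2 :=
          Finset.sum_le_sum fun s hs => hRs s (Finset.ne_of_mem_erase hs)
      _ ≤ ∑ s : Fin 2 → F, 2 * ∑ m : Fin 2 → F, (a m * a (s - m))^2 :=
          Finset.sum_le_sum_of_subset_of_nonneg (Finset.erase_subset _ _)
            fun s _ _ => by positivity
      _ = 2 * ∑ s : Fin 2 → F, ∑ m : Fin 2 → F, a m^2 * a (s - m)^2 := by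
          rw [← Finset.mul_sum]
          congr 1
          exact Finset.sum_congr rfl fun s _ => Finset.sum_congr rfl fun m _ => by ring
      _ = 2 * ∑ m : Fin 2 → F, ∑ s : Fin 2 → F, a m^2 * a (s - m)^2 := by
          rw [Finset.sum_comm]
      _ = 2 * ∑ m : Fin 2 → F, a m^2 * A := by
          congr 1
          refine Finset.sum_congr rfl fun m _ => ?_
          rw [← Finset.mul_sum, hAs m]
      _ = 2 * A^2 := by rw [← Finset.sum_mul, ← hAdef, sq]
  calc ∑ s : Fin 2 → F, R s^2
      = R 0^2 + ∑ s ∈ Finset.univ.erase (0 : Fin 2 → F), R s^2 := by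
        exact (Finset.add_sum_erase _ (fun s => R s ^ 2) (Finset.mem_univ 0)).symm
    _ ≤ A^2 + 2 * A^2 := add_le_add hR0sq htail
    _ = 3 * A^2 := by ring

theorem stmt_14 :
    ∃ C : ℝ, 0 < C ∧
      ∀ (p n : ℕ), p.Prime → p % 4 = 3 → Odd n →
      ∀ (F : Type) [Field F] [Fintype F], Fintype.card F = p ^ n →
      ∀ (χ : AddChar F ℂ), χ ≠ 1 →
      ∀ (t : F), t ≠ 0 →
      ∀ (g : (Fin 2 → F) → ℂ),
        (∀ x : Fin 2 → F, x 0 ^ 2 + x 1 ^ 2 ≠ t → g x = 0) →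
        ∑ ξ : Fin 2 → F,
            ‖((Fintype.card F : ℂ) ^ 2)⁻¹ *
              ∑ m : Fin 2 → F, χ (-(m ⬝ᵥ ξ)) * g m‖ ^ 4
          ≤ C * ((Fintype.card F : ℝ) ^ 6)⁻¹ *
              (∑ m : Fin 2 → F, ‖g m‖ ^ 2) ^ 2 := by
  refine ⟨3, by norm_num, ?_⟩
  intro p n hp hp4 hn F _ _ hcard χ hχ t ht g hsupp
  classical
  set q : ℕ := Fintype.card F with hq
  -- basic facts
  have hq4 : q % 4 = 3 := by
    rw [hcard, Nat.pow_mod, hp4]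
    obtain ⟨k, rfl⟩ := hn
    rw [pow_succ, pow_mul, Nat.mul_mod, Nat.pow_mod]
    norm_num
  have hns : ¬ IsSquare (-1 : F) := by
    rw [FiniteField.isSquare_neg_one_iff]
    simp [← hq, hq4]
  have h2 : (2 : F) ≠ 0 := by
    intro h
    apply hns
    refine ⟨1, ?_⟩
    linear_combination -h
  have hq0 : (0:ℝ) < (q:ℝ) := by
    have h1 : 0 < q := by rw [hq]; exact Fintype.card_pos
    exact_mod_cast h1
  set h : (Fin 2 → F) → ℂ := fun ξ => ∑ m : Fin 2 → F, χ (-(m ⬝ᵥ ξ)) * g m with hhdef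
  set A : ℝ := ∑ m : Fin 2 → F, ‖g m‖ ^ 2 with hAdef
  -- pointwise: norm^4 as re of (z conj z)^2
  have hpt : ∀ ξ : Fin 2 → F, ((‖h ξ‖^4 : ℝ) : ℂ) = (h ξ * conj (h ξ))^2 := by
    intro ξ
    rw [Complex.mul_conj, Complex.normSq_eq_norm_sq]
    push_cast
    ring
  -- expansion of h ξ * conj (h ξ)
  have hX : ∀ ξ : Fin 2 → F, h ξ * conj (h ξ)
      = ∑ pr : (Fin 2 → F) × (Fin 2 → F),
          χ ((pr.2 - pr.1) ⬝ᵥ ξ) * (g pr.1 * conj (g pr.2)) := by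
    intro ξ
    have hc : conj (h ξ) = ∑ m' : Fin 2 → F, χ (m' ⬝ᵥ ξ) * conj (g m') := by
      rw [hhdef]
      simp only []
      rw [map_sum]
      refine Finset.sum_congr rfl fun m' _ => ?_
      rw [_root_.map_mul]
      congr 1
      rw [← AddChar.map_neg_eq_conj, neg_neg]
    rw [hc, hhdef]
    simp only []
    rw [Finset.sum_mul_sum, Fintype.sum_prod_type]
    refine Finset.sum_congr rfl fun m _ => Finset.sum_congr rfl fun m' _ => ?_
    dsimp only
    rw [show ((m' - m) ⬝ᵥ ξ) = m' ⬝ᵥ ξ + -(m ⬝ᵥ ξ) by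
      rw [sub_dotProduct]; ring, AddChar.map_add_eq_mul]
    ring
  have hpt2 : ∀ ξ : Fin 2 → F, (h ξ * conj (h ξ))^2
      = ∑ τ : ((Fin 2 → F) × (Fin 2 → F)) × ((Fin 2 → F) × (Fin 2 → F)),
          χ ((τ.1.2 + τ.2.2 - τ.1.1 - τ.2.1) ⬝ᵥ ξ) *
            (g τ.1.1 * conj (g τ.1.2) * (g τ.2.1 * conj (g τ.2.2))) := by
    intro ξ
    rw [sq, hX ξ, Finset.sum_mul_sum]
    conv_rhs => rw [Fintype.sum_prod_type]
    refine Finset.sum_congr rfl fun pr _ => Finset.sum_congr rfl fun pr' _ => ?_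
    dsimp only
    rw [show ((pr.2 + pr'.2 - pr.1 - pr'.1) ⬝ᵥ ξ)
        = (pr.2 - pr.1) ⬝ᵥ ξ + (pr'.2 - pr'.1) ⬝ᵥ ξ by
      rw [← add_dotProduct]; congr 1; ring, AddChar.map_add_eq_mul]
    ring
  -- sum over ξ and orthogonality
  have hswap : ∑ ξ : Fin 2 → F, (h ξ * conj (h ξ))^2
      = ∑ τ : ((Fin 2 → F) × (Fin 2 → F)) × ((Fin 2 → F) × (Fin 2 → F)),
          (if τ.1.1 + τ.2.1 = τ.1.2 + τ.2.2 then
            (q:ℂ)^2 * (g τ.1.1 * conj (g τ.1.2) * (g τ.2.1 * conj (g τ.2.2))) else 0) := by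
    calc ∑ ξ : Fin 2 → F, (h ξ * conj (h ξ))^2
        = ∑ ξ : Fin 2 → F, ∑ τ : ((Fin 2 → F) × (Fin 2 → F)) × ((Fin 2 → F) × (Fin 2 → F)),
            χ ((τ.1.2 + τ.2.2 - τ.1.1 - τ.2.1) ⬝ᵥ ξ) *
              (g τ.1.1 * conj (g τ.1.2) * (g τ.2.1 * conj (g τ.2.2))) :=
          Finset.sum_congr rfl fun ξ _ => hpt2 ξ
      _ = ∑ τ : ((Fin 2 → F) × (Fin 2 → F)) × ((Fin 2 → F) × (Fin 2 → F)),
            ∑ ξ : Fin 2 → F, χ ((τ.1.2 + τ.2.2 - τ.1.1 - τ.2.1) ⬝ᵥ ξ) *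
              (g τ.1.1 * conj (g τ.1.2) * (g τ.2.1 * conj (g τ.2.2))) := Finset.sum_comm
      _ = _ := by
          refine Finset.sum_congr rfl fun τ _ => ?_
          rw [← Finset.sum_mul, char_sum_vec χ hχ, ← hq]
          rw [ite_mul, zero_mul]
          refine if_congr ?_ rfl rfl
          constructor
          · intro hv
            linear_combination -hv
          · intro hv
            linear_combination -hv
  -- main estimate
  have hmain : ∑ ξ : Fin 2 → F, ‖h ξ‖^4 ≤ (q:ℝ)^2 * (3 * A^2) := by
    have hsum1 : ∑ ξ : Fin 2 → F, ‖h ξ‖^4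
        = Complex.re (∑ ξ : Fin 2 → F, (h ξ * conj (h ξ))^2) := by
      rw [Complex.re_sum]
      exact Finset.sum_congr rfl fun ξ _ => by rw [← hpt ξ, Complex.ofReal_re]
    rw [hsum1, hswap]
    have hnorm : ∀ τ : ((Fin 2 → F) × (Fin 2 → F)) × ((Fin 2 → F) × (Fin 2 → F)),
        ‖if τ.1.1 + τ.2.1 = τ.1.2 + τ.2.2 then
          (q:ℂ)^2 * (g τ.1.1 * conj (g τ.1.2) * (g τ.2.1 * conj (g τ.2.2))) else 0‖
        = if τ.1.1 + τ.2.1 = τ.1.2 + τ.2.2 then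
          (q:ℝ)^2 * (‖g τ.1.1‖ * ‖g τ.1.2‖ * (‖g τ.2.1‖ * ‖g τ.2.2‖)) else 0 := by
      intro τ
      rw [apply_ite (‖·‖), norm_zero]
      refine if_congr Iff.rfl ?_ rfl
      simp [norm_mul]
    calc Complex.re (∑ τ : ((Fin 2 → F) × (Fin 2 → F)) × ((Fin 2 → F) × (Fin 2 → F)),
            (if τ.1.1 + τ.2.1 = τ.1.2 + τ.2.2 then
              (q:ℂ)^2 * (g τ.1.1 * conj (g τ.1.2) * (g τ.2.1 * conj (g τ.2.2))) else 0))
        ≤ ‖∑ τ : ((Fin 2 → F) × (Fin 2 → F)) × ((Fin 2 → F) × (Fin 2 → F)),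
            (if τ.1.1 + τ.2.1 = τ.1.2 + τ.2.2 then
              (q:ℂ)^2 * (g τ.1.1 * conj (g τ.1.2) * (g τ.2.1 * conj (g τ.2.2))) else 0)‖ :=
          Complex.re_le_norm _
      _ ≤ ∑ τ : ((Fin 2 → F) × (Fin 2 → F)) × ((Fin 2 → F) × (Fin 2 → F)),
            ‖if τ.1.1 + τ.2.1 = τ.1.2 + τ.2.2 then
              (q:ℂ)^2 * (g τ.1.1 * conj (g τ.1.2) * (g τ.2.1 * conj (g τ.2.2))) else 0‖ :=
          norm_sum_le _ _
      _ = (q:ℝ)^2 * ∑ τ : ((Fin 2 → F) × (Fin 2 → F)) × ((Fin 2 → F) × (Fin 2 → F)),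
            (if τ.1.1 + τ.2.1 = τ.1.2 + τ.2.2 then
              ‖g τ.1.1‖ * ‖g τ.1.2‖ * (‖g τ.2.1‖ * ‖g τ.2.2‖) else 0) := by
          rw [Finset.mul_sum]
          refine Finset.sum_congr rfl fun τ _ => ?_
          rw [hnorm τ, mul_ite, mul_zero]
      _ ≤ (q:ℝ)^2 * (3 * A^2) := by
          refine mul_le_mul_of_nonneg_left ?_ (by positivity)
          rw [hAdef]
          exact comb hns h2 t (fun m => ‖g m‖) (fun m => norm_nonneg _)
            (fun m hm => by simp [hsupp m hm])
  -- conclude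
  have hfinal : ∀ ξ : Fin 2 → F,
      ‖((q:ℂ)^2)⁻¹ * h ξ‖^4 = ((q:ℝ)^8)⁻¹ * ‖h ξ‖^4 := by
    intro ξ
    rw [norm_mul, norm_inv, norm_pow, Complex.norm_natCast]
    rw [mul_pow, ← inv_pow, ← pow_mul]
    norm_num
  calc ∑ ξ : Fin 2 → F, ‖((q:ℂ)^2)⁻¹ * h ξ‖^4
      = ((q:ℝ)^8)⁻¹ * ∑ ξ : Fin 2 → F, ‖h ξ‖^4 := by
        rw [Finset.mul_sum]
        exact Finset.sum_congr rfl fun ξ _ => hfinal ξ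
    _ ≤ ((q:ℝ)^8)⁻¹ * ((q:ℝ)^2 * (3 * A^2)) := by
        exact mul_le_mul_of_nonneg_left hmain (by positivity)
    _ = 3 * ((q:ℝ)^6)⁻¹ * A^2 := by
        field_simp
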